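/- arXiv:1711.06280 — 2 statements merged into one kernel-verified Lean document; each statement's English description precedes it below -/
import Mathlib

section
/- Suppose 1, θ₁, θ₂ are linearly dependent over ℤ with at least one θⱼ irrational, i.e., there is a nonzero integer vector z = (z₀,z₁,z₂) with z₀ + z₁θ₁ + z₂θ₂ = 0. Then there exists a constant γ > 0 such that for every (η₁,η₂) on the line P = {(x₁,x₂) : z₀ + z₁x₁ + z₂x₂ = 0}, the inequality max_{i=1,2} ‖θᵢ x − ηᵢ‖ < γ/x has infinitely many solutions in positive integers x. -/
set_option maxHeartbeats 1000000

/-- Distance from a real number to the nearest integer. -/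
noncomputable def distNearestInt (t : ℝ) : ℝ := |t - round t|

lemma dni_nonneg (t : ℝ) : 0 ≤ distNearestInt t := abs_nonneg _

lemma dni_le (t : ℝ) (m : ℤ) : distNearestInt t ≤ |t - m| := by
  unfold distNearestInt
  rw [abs_sub_round_eq_min]
  rcases le_or_gt m ⌊t⌋ with h | h
  · have h' : (m : ℝ) ≤ ⌊t⌋ := by exact_mod_cast h
    have hf : Int.fract t ≤ t - m := by
      have := Int.self_sub_floor t
      linarith
    exact le_trans (min_le_left _ _) (hf.trans (le_abs_self _))
  · have h' : (⌊t⌋ : ℝ) + 1 ≤ m := by exact_mod_cast h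
    have hf : 1 - Int.fract t ≤ m - t := by
      have := Int.self_sub_floor t
      linarith
    calc min (Int.fract t) (1 - Int.fract t) ≤ 1 - Int.fract t := min_le_right _ _
      _ ≤ m - t := hf
      _ ≤ |m - t| := le_abs_self _
      _ = |t - m| := abs_sub_comm _ _

lemma den_unbounded (θ : ℝ) (hθ : Irrational θ) (N : ℕ) :
    ∃ r : ℚ, |θ - r| < 1 / (r.den : ℝ) ^ 2 ∧ N < r.den := by
  by_contra hcon
  push_neg at hcon
  have hS := Real.infinite_rat_abs_sub_lt_one_div_den_sq_of_irrational hθ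
  apply hS
  set B : ℤ := ⌈(1 + |θ|) * N⌉ with hB
  have hsub : {q : ℚ | |θ - q| < 1 / (q.den : ℝ) ^ 2} ⊆
      {q : ℚ | q.num ∈ Set.Icc (-B) B ∧ q.den ∈ Set.Iic N} := by
    intro q hq
    have hq' : |θ - q| < 1 / (q.den : ℝ) ^ 2 := hq
    have hdN : q.den ≤ N := hcon q hq'
    have hd1 : (1 : ℝ) ≤ (q.den : ℝ) := by exact_mod_cast q.pos
    have hlt1 : |θ - q| < 1 := by
      refine hq'.trans_le ?_
      rw [div_le_one (by positivity)]
      nlinarith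
    have habs : |(q : ℝ)| ≤ 1 + |θ| := by
      have := abs_sub_abs_le_abs_sub (q : ℝ) θ
      have h2 : |(q : ℝ) - θ| < 1 := by rwa [abs_sub_comm]
      linarith
    have hnum : |(q.num : ℝ)| ≤ (1 + |θ|) * N := by
      have hqd : (q : ℝ) = (q.num : ℝ) / (q.den : ℝ) := by
        rw [Rat.cast_def]
      have : |(q.num : ℝ)| = |(q : ℝ)| * (q.den : ℝ) := by
        rw [hqd, abs_div, abs_of_pos (by linarith : (0:ℝ) < (q.den:ℝ))]
        field_simp
      rw [this]
      have hdN' : (q.den : ℝ) ≤ (N : ℝ) := by exact_mod_cast hdN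
      have h0 : (0:ℝ) ≤ |(q:ℝ)| := abs_nonneg _
      nlinarith
    have hnumB : |q.num| ≤ B := by
      have h1 : ((1 + |θ|) * N : ℝ) ≤ (B : ℝ) := Int.le_ceil _
      have : |(q.num : ℝ)| ≤ (B : ℝ) := hnum.trans h1
      exact_mod_cast this
    exact ⟨Set.mem_Icc.mpr (abs_le.mp hnumB), Set.mem_Iic.mpr hdN⟩
  refine Set.Finite.subset ?_ hsub
  have hinj : Set.InjOn (fun q : ℚ => (q.num, q.den)) Set.univ := by
    intro a _ b _ hab
    simp only [Prod.mk.injEq] at hab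
    rw [← Rat.num_div_den a, ← Rat.num_div_den b, hab.1, hab.2]
  have himg : (fun q : ℚ => (q.num, q.den)) '' {q : ℚ | q.num ∈ Set.Icc (-B) B ∧ q.den ∈ Set.Iic N}
      ⊆ (Set.Icc (-B) B) ×ˢ (Set.Iic N) := by
    rintro ⟨n, d⟩ ⟨q, hq, hqe⟩
    simp only [Prod.mk.injEq] at hqe
    exact ⟨hqe.1 ▸ hq.1, hqe.2 ▸ hq.2⟩
  exact Set.Finite.of_finite_image
    (Set.Finite.subset (Set.Finite.prod (Set.finite_Icc _ _) (Set.finite_Iic _)) himg)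
    (hinj.mono (Set.subset_univ _))

lemma inhomog (θ : ℝ) (hθ : Irrational θ) (α : ℝ) (N : ℕ) :
    ∃ n : ℕ, N < n ∧ distNearestInt (θ * n - α) < 6 / n := by
  obtain ⟨r, hr, hden⟩ := den_unbounded θ hθ N
  set q : ℕ := r.den with hqdef
  set p : ℤ := r.num with hpdef
  have hq0 : 0 < q := r.pos
  have hQ : (0:ℝ) < (q : ℝ) := by exact_mod_cast hq0
  -- δ = qθ - p, |δ| < 1/q
  set δ : ℝ := (q : ℝ) * θ - (p : ℝ) with hδdef
  have hδ : |δ| < 1 / (q : ℝ) := by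
    have hrq : (r : ℝ) = (p : ℝ) / (q : ℝ) := by rw [Rat.cast_def]
    have he : δ = (q : ℝ) * (θ - r) := by
      rw [hrq, hδdef]; field_simp
    rw [he, abs_mul, abs_of_pos hQ]
    calc (q : ℝ) * |θ - r| < (q : ℝ) * (1 / (q:ℝ)^2) := mul_lt_mul_of_pos_left hr hQ
      _ = 1 / (q : ℝ) := by field_simp
  set m : ℤ := round ((q : ℝ) * α) with hmdef
  have hm : |(q : ℝ) * α - m| ≤ 1 / 2 := abs_sub_round _
  -- Bezout
  have hcop : IsCoprime p (q : ℤ) := by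
    rw [Int.isCoprime_iff_gcd_eq_one]
    exact r.reduced
  obtain ⟨a, b, hab⟩ := hcop
  -- choose n ≡ m * a mod q, with q ≤ n < 2q
  obtain ⟨s, hs0, hsq, hsmod⟩ : ∃ s : ℤ, 0 ≤ s ∧ s < (q : ℤ) ∧ s ≡ m * a [ZMOD (q : ℤ)] :=
    ⟨(m * a) % (q : ℤ), Int.emod_nonneg _ (by exact_mod_cast hq0.ne'),
      Int.emod_lt_of_pos _ (by exact_mod_cast hq0),
      by show (m * a) % (q:ℤ) % (q:ℤ) = (m * a) % (q:ℤ); exact Int.emod_emod_of_dvd _ dvd_rfl⟩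
  obtain ⟨n, hnZ⟩ : ∃ n : ℕ, (n : ℤ) = s + q := ⟨(s + (q:ℤ)).toNat, Int.toNat_of_nonneg (by omega)⟩
  have hnlb : q ≤ n := by omega
  have hnub : n < 2 * q := by omega
  have hn0 : 0 < n := lt_of_lt_of_le hq0 hnlb
  have hdvd : (q : ℤ) ∣ (n : ℤ) * p - m := by
    have hnmod : (n : ℤ) ≡ s [ZMOD (q : ℤ)] := by
      show (n : ℤ) % q = s % q
      rw [hnZ]; simpa using Int.add_mul_emod_self_left s (q:ℤ) 1
    have h1 : (n : ℤ) * p - m ≡ m * a * p - m [ZMOD (q : ℤ)] :=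
      ((hnmod.trans hsmod).mul_right p).sub_right m
    have h2 : (q : ℤ) ∣ m * a * p - m := ⟨-(m * b), by linear_combination m * hab⟩
    have h3 : m * a * p - m ≡ 0 [ZMOD (q : ℤ)] := (Int.modEq_zero_iff_dvd).mpr h2
    exact (Int.modEq_zero_iff_dvd).mp (h1.trans h3)
  obtain ⟨k, hk⟩ := hdvd
  -- θ * n - α = k + (m - qα)/q + n * δ / q
  have hkey : θ * n - α = (k : ℝ) + ((m : ℝ) - (q : ℝ) * α) / q + (n : ℝ) * δ / q := by
    have hnp : (n : ℝ) * (p : ℝ) = (m : ℝ) + (q : ℝ) * (k : ℝ) := by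
      have : ((n : ℤ) * p : ℤ) = (m + (q : ℤ) * k : ℤ) := by linarith [hk]
      exact_mod_cast this
    have hθn : θ * n = (n : ℝ) * (p : ℝ) / q + (n : ℝ) * δ / q := by
      field_simp [hδdef]
      ring
    rw [hθn, hnp]
    field_simp
    ring
  have hbound : distNearestInt (θ * n - α) < 6 / n := by
    have h1 : distNearestInt (θ * n - α) ≤ |θ * n - α - k| := dni_le _ k
    have h2 : |θ * n - α - k| ≤ |(m : ℝ) - (q : ℝ) * α| / q + (n : ℝ) * |δ| / q := by
      rw [hkey]
      have : (k : ℝ) + ((m : ℝ) - (q : ℝ) * α) / q + (n : ℝ) * δ / q - k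
          = ((m : ℝ) - (q : ℝ) * α) / q + (n : ℝ) * δ / q := by ring
      rw [this]
      refine (abs_add_le _ _).trans ?_
      rw [abs_div, abs_div, abs_of_pos hQ, abs_mul, abs_of_nonneg (by positivity : (0:ℝ) ≤ (n:ℝ))]
    have hm' : |(m : ℝ) - (q : ℝ) * α| ≤ 1 / 2 := by rwa [abs_sub_comm] at hm
    have hnq : (n : ℝ) < 2 * q := by exact_mod_cast hnub
    have hn0' : (0:ℝ) < n := by exact_mod_cast hn0
    have h3 : (n : ℝ) * |δ| / q < 2 / q := by
      have habs0 : 0 ≤ |δ| := abs_nonneg _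
      rw [div_lt_div_iff₀ hQ hQ]
      have : (n : ℝ) * |δ| < 2 * q * (1 / q) := by
        rcases eq_or_lt_of_le habs0 with h | h
        · rw [← h]; simp; positivity
        · calc (n : ℝ) * |δ| < 2 * q * |δ| := by nlinarith
            _ < 2 * q * (1 / q) := by nlinarith
      calc (n : ℝ) * |δ| * q < 2 * q * (1/q) * q := by nlinarith
        _ = 2 * q := by field_simp
    have h4 : |(m : ℝ) - (q : ℝ) * α| / q ≤ 1 / (2 * q) := by
      rw [div_le_div_iff₀ hQ (by positivity)]
      nlinarith
    have h5 : (1 : ℝ) / (2 * q) + 2 / q < 6 / n := by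
      have e : (1:ℝ)/(2*q) + 2/q = 5/(2*q) := by field_simp; ring
      rw [e, div_lt_div_iff₀ (by positivity) hn0']
      linarith
    calc distNearestInt (θ * n - α) ≤ |(m : ℝ) - (q : ℝ) * α| / q + (n : ℝ) * |δ| / q :=
          h1.trans h2
      _ < 1 / (2 * q) + 2 / q := by linarith
      _ < 6 / n := h5
  exact ⟨n, lt_of_lt_of_le hden hnlb, hbound⟩

lemma inhomog_inf (θ : ℝ) (hθ : Irrational θ) (α : ℝ) :
    {n : ℕ | 0 < n ∧ distNearestInt (θ * n - α) < 6 / n}.Infinite := by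
  set S := {n : ℕ | 0 < n ∧ distNearestInt (θ * n - α) < 6 / n} with hS
  by_contra hfin
  rw [Set.not_infinite] at hfin
  obtain ⟨B, hB⟩ := hfin.bddAbove
  obtain ⟨n, hn1, hn2⟩ := inhomog θ hθ α B
  exact absurd (hB ⟨lt_of_le_of_lt (Nat.zero_le B) hn1, hn2⟩) (by omega)

lemma keyB (θ₁ θ₂ : ℝ) (z₀ z₁ z₂ : ℤ) (hz2 : z₂ ≠ 0) (hθ : Irrational θ₁)
    (hrel : (z₀ : ℝ) + z₁ * θ₁ + z₂ * θ₂ = 0) :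
    ∃ γ : ℝ, 0 < γ ∧ ∀ η₁ η₂ : ℝ, (z₀ : ℝ) + z₁ * η₁ + z₂ * η₂ = 0 →
      {x : ℕ | 0 < x ∧
        max (distNearestInt (θ₁ * x - η₁)) (distNearestInt (θ₂ * x - η₂)) < γ / x}.Infinite := by
  set a : ℝ := |(z₁ : ℝ)| with ha
  set b : ℝ := |(z₂ : ℝ)| with hb
  have hb1 : (1 : ℝ) ≤ b := by
    have : (1 : ℤ) ≤ |z₂| := Int.one_le_abs hz2
    calc (1:ℝ) ≤ ((|z₂| : ℤ) : ℝ) := by exact_mod_cast this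
      _ = b := by push_cast; rfl
  have ha0 : 0 ≤ a := abs_nonneg _
  refine ⟨6 * (a + b) * (b + 1), by nlinarith, ?_⟩
  intro η₁ η₂ hη
  set w : ℕ := z₂.natAbs with hw
  have hw0 : 0 < w := Int.natAbs_pos.mpr hz2
  have hwb : (w : ℝ) = b := by
    rw [hb, hw]
    push_cast [Nat.cast_natAbs]
    rfl
  have hwb0 : (0:ℝ) < (w:ℝ) := by rw [hwb]; linarith
  set α : ℝ := (η₁ - θ₁) / w with hα
  have hSinf := inhomog_inf θ₁ hθ α
  set f : ℕ → ℕ := fun n => 1 + w * n with hf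
  have hinj : Set.InjOn f {n : ℕ | 0 < n ∧ distNearestInt (θ₁ * n - α) < 6 / n} := by
    intro x _ y _ hxy
    simp only [hf] at hxy
    exact Nat.eq_of_mul_eq_mul_left hw0 (by omega)
  refine Set.Infinite.mono ?_ (hSinf.image hinj)
  rintro x ⟨n, ⟨hn0, hnd⟩, rfl⟩
  have hn0' : (0:ℝ) < (n:ℝ) := by exact_mod_cast hn0
  have hx0 : 0 < f n := by simp [hf]
  have hxR : ((f n : ℕ) : ℝ) = 1 + (w:ℝ) * n := by simp only [hf]; push_cast; ring
  have hxpos : (0:ℝ) < ((f n : ℕ) : ℝ) := by exact_mod_cast hx0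
  set k : ℤ := round (θ₁ * n - α) with hk
  set δ : ℝ := θ₁ * n - α - k with hδ
  have hδabs : |δ| < 6 / n := hnd
  -- first coordinate
  have e1 : θ₁ * (f n : ℕ) - η₁ = (w : ℝ) * k + (w : ℝ) * δ := by
    rw [hxR]
    have : (w:ℝ) * α = η₁ - θ₁ := by
      rw [hα]; field_simp
    rw [hδ]
    nlinarith [this]
  have d1 : distNearestInt (θ₁ * (f n : ℕ) - η₁) ≤ b * |δ| := by
    have := dni_le (θ₁ * (f n : ℕ) - η₁) ((w : ℤ) * k)
    rw [e1] at this ⊢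
    calc distNearestInt ((w : ℝ) * k + (w : ℝ) * δ) ≤ |(w:ℝ) * k + (w:ℝ)*δ - ((w:ℤ)*k : ℤ)| := by
          exact_mod_cast this
      _ = |(w:ℝ) * δ| := by push_cast; ring_nf
      _ = b * |δ| := by rw [abs_mul, abs_of_pos hwb0, hwb]
  -- second coordinate
  have hz2R : ((z₂ : ℤ) : ℝ) ≠ 0 := Int.cast_ne_zero.mpr hz2
  have hzw : (z₂ : ℤ) ∣ ((w : ℤ)) := Int.dvd_natAbs.mpr dvd_rfl
  have hdvd2 : z₂ ∣ -(z₀ * (w : ℤ) * (n : ℤ) + z₁ * (w : ℤ) * k) :=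
    (((hzw.mul_left z₀).mul_right (n : ℤ)).add ((hzw.mul_left z₁).mul_right k)).neg_right
  obtain ⟨c, hc⟩ := hdvd2
  have hcR : -((z₀ : ℝ) * w * n + (z₁ : ℝ) * w * k) = (z₂ : ℝ) * c := by exact_mod_cast hc
  have e2' : θ₂ * (f n : ℕ) - η₂ = ((z₂ : ℝ) * c - (z₁ : ℝ) * (w : ℝ) * δ) / (z₂ : ℝ) := by
    rw [eq_div_iff hz2R]
    linear_combination ((f n : ℕ) : ℝ) * hrel - hη - (z₁ : ℝ) * e1 - (z₀ : ℝ) * hxR + hcR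
  have d2 : distNearestInt (θ₂ * (f n : ℕ) - η₂) ≤ a * |δ| := by
    refine (dni_le _ c).trans ?_
    rw [e2']
    have hb0 : (0:ℝ) < b := by linarith
    have h7 : ((z₂ : ℝ) * c - (z₁ : ℝ) * (w : ℝ) * δ) / (z₂ : ℝ) - (c : ℝ)
        = -((z₁ : ℝ) * (w : ℝ) * δ / (z₂ : ℝ)) := by
      field_simp
      ring
    rw [h7, abs_neg, abs_div, abs_mul, abs_mul, abs_of_pos hwb0, hwb, ← ha, ← hb]
    have h8 : a * b * |δ| / b = a * |δ| := by
      field_simp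
    rw [h8]
  -- combine
  refine ⟨hx0, ?_⟩
  have habδ : 0 ≤ |δ| := abs_nonneg _
  have hmax : max (distNearestInt (θ₁ * (f n : ℕ) - η₁)) (distNearestInt (θ₂ * (f n : ℕ) - η₂))
      ≤ (a + b) * |δ| := by
    apply max_le
    · exact d1.trans (mul_le_mul_of_nonneg_right (by linarith) habδ)
    · exact d2.trans (mul_le_mul_of_nonneg_right (by linarith) habδ)
  have hstep : (a + b) * |δ| < (a + b) * (6 / n) := by
    have : (0:ℝ) < a + b := by linarith
    exact mul_lt_mul_of_pos_left hδabs this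
  have hfin : (a + b) * (6 / n) ≤ 6 * (a + b) * (b + 1) / (f n : ℕ) := by
    rw [mul_div_assoc', div_le_div_iff₀ hn0' hxpos]
    have hn1 : (1:ℝ) ≤ (n:ℝ) := by exact_mod_cast hn0
    have hxle : ((f n : ℕ) : ℝ) ≤ (b + 1) * n := by rw [hxR, hwb]; nlinarith
    have h9 : 6 * (a + b) * ((f n : ℕ) : ℝ) ≤ 6 * (a + b) * ((b + 1) * n) :=
      mul_le_mul_of_nonneg_left hxle (by linarith)
    nlinarith [h9]
  calc max (distNearestInt (θ₁ * (f n : ℕ) - η₁)) (distNearestInt (θ₂ * (f n : ℕ) - η₂))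
      ≤ (a + b) * |δ| := hmax
    _ < (a + b) * (6 / n) := hstep
    _ ≤ 6 * (a + b) * (b + 1) / (f n : ℕ) := hfin


lemma rat_combo (θ₁ θ₂ : ℝ) (z₀ z₁ z₂ : ℤ) (hz2 : z₂ ≠ 0)
    (hrel : (z₀ : ℝ) + z₁ * θ₁ + z₂ * θ₂ = 0) (h : ¬Irrational θ₁) : ¬Irrational θ₂ := by
  rw [Irrational] at h ⊢
  rw [not_not] at h ⊢
  obtain ⟨r, hr⟩ := h
  refine ⟨(-z₀ - z₁ * r) / z₂, ?_⟩
  have hz2Q : (z₂ : ℚ) ≠ 0 := Int.cast_ne_zero.mpr hz2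
  have hz2R : ((z₂ : ℤ) : ℝ) ≠ 0 := Int.cast_ne_zero.mpr hz2
  push_cast
  rw [div_eq_iff hz2R]
  push_cast at hr
  rw [hr]
  linarith

theorem stmt2 (θ₁ θ₂ : ℝ) (z₀ z₁ z₂ : ℤ) (hz : ¬(z₀ = 0 ∧ z₁ = 0 ∧ z₂ = 0))
    (hrel : (z₀ : ℝ) + z₁ * θ₁ + z₂ * θ₂ = 0)
    (hirr : Irrational θ₁ ∨ Irrational θ₂) :
    ∃ γ : ℝ, 0 < γ ∧ ∀ η₁ η₂ : ℝ, (z₀ : ℝ) + z₁ * η₁ + z₂ * η₂ = 0 →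
      {x : ℕ | 0 < x ∧
        max (distNearestInt (θ₁ * x - η₁)) (distNearestInt (θ₂ * x - η₂)) < γ / x}.Infinite := by
  have hz12 : z₁ ≠ 0 ∨ z₂ ≠ 0 := by
    by_contra h
    push_neg at h
    obtain ⟨h1, h2⟩ := h
    apply hz
    refine ⟨?_, h1, h2⟩
    have : (z₀ : ℝ) = 0 := by rw [h1, h2] at hrel; push_cast at hrel; linarith
    exact_mod_cast this
  rcases ne_or_eq z₂ 0 with hz2 | hz2
  · -- θ₁ must be irrational
    have hθ1 : Irrational θ₁ := by
      by_contra h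
      have h2 := rat_combo θ₁ θ₂ z₀ z₁ z₂ hz2 hrel h
      tauto
    exact keyB θ₁ θ₂ z₀ z₁ z₂ hz2 hθ1 hrel
  · -- z₂ = 0, so z₁ ≠ 0
    have hz1 : z₁ ≠ 0 := by tauto
    have hrel' : (z₀ : ℝ) + z₂ * θ₂ + z₁ * θ₁ = 0 := by linarith
    have hθ2 : Irrational θ₂ := by
      by_contra h
      have h2 := rat_combo θ₂ θ₁ z₀ z₂ z₁ hz1 hrel' h
      tauto
    obtain ⟨γ, hγ, hmain⟩ := keyB θ₂ θ₁ z₀ z₂ z₁ hz1 hθ2 hrel'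
    refine ⟨γ, hγ, ?_⟩
    intro η₁ η₂ hη
    have hη' : (z₀ : ℝ) + z₂ * η₂ + z₁ * η₁ = 0 := by linarith
    have := hmain η₂ η₁ hη'
    convert this using 2
    funext x
    rw [max_comm]
end

section
/- Let Λ be a rank-2 lattice in a 2-dimensional plane π ⊂ ℝ³ with covolume (determinant) d, let v ∈ Λ be a nonzero vector, and let σ = min over w ∈ Λ \ ℝv of dist(w, ℝv). Then the rectangle Π = {t·v + r·e : 0 ≤ t ≤ 1, |r| ≤ σ}, where e is a unit vector in π orthogonal to v, contains a fundamental domain of Λ; in particular, every translate of Π by a point of π contains a lattice point of Λ. -/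
open Metric

set_option maxHeartbeats 1000000

theorem stmt5 (Λ : AddSubgroup (EuclideanSpace ℝ (Fin 3)))
    (π : Submodule ℝ (EuclideanSpace ℝ (Fin 3)))
    (hdim : Module.finrank ℝ π = 2)
    (hsub : (Λ : Set (EuclideanSpace ℝ (Fin 3))) ⊆ (π : Set (EuclideanSpace ℝ (Fin 3))))
    (hspan : Submodule.span ℝ (Λ : Set (EuclideanSpace ℝ (Fin 3))) = π)
    (hdisc : DiscreteTopology Λ)
    (v : EuclideanSpace ℝ (Fin 3)) (hv : v ∈ Λ) (hv0 : v ≠ 0)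
    (σ : ℝ)
    (hσ : σ = sInf {r : ℝ | ∃ w ∈ Λ, w ∉ Submodule.span ℝ {v} ∧
        r = Metric.infDist w (Submodule.span ℝ {v} : Set (EuclideanSpace ℝ (Fin 3)))})
    (e : EuclideanSpace ℝ (Fin 3)) (he : e ∈ π) (hen : ‖e‖ = 1)
    (heo : inner ℝ e v = (0 : ℝ))
    (P : Set (EuclideanSpace ℝ (Fin 3)))
    (hPdef : P = {x | ∃ t r : ℝ, 0 ≤ t ∧ t ≤ 1 ∧ |r| ≤ σ ∧ x = t • v + r • e}) :
    (∃ F ⊆ P, ∀ u ∈ π, ∃ g ∈ Λ, u - g ∈ F) ∧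
    ∀ ζ ∈ π, ∃ p ∈ Λ, ∃ y ∈ P, p = ζ + y := by
  have hvπ : v ∈ π := hsub hv
  have hee : (inner ℝ e e : ℝ) = 1 := by
    rw [real_inner_self_eq_norm_sq, hen]; norm_num
  have hvv : (inner ℝ v v : ℝ) = ‖v‖ ^ 2 := real_inner_self_eq_norm_sq v
  have hve : (inner ℝ v e : ℝ) = 0 := by rw [real_inner_comm]; exact heo
  -- π = span {v, e}
  have hli : LinearIndependent ℝ ![(⟨v, hvπ⟩ : π), ⟨e, he⟩] := by
    rw [LinearIndependent.pair_iff]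
    intro s t hst
    have h1 : s • v + t • e = 0 := by
      have := congrArg (Subtype.val) hst
      simpa using this
    have h2 : (inner ℝ e (s • v + t • e) : ℝ) = 0 := by rw [h1, inner_zero_right]
    rw [inner_add_right, inner_smul_right, inner_smul_right, heo, hee] at h2
    simp at h2
    have h3 : (inner ℝ v (s • v + t • e) : ℝ) = 0 := by rw [h1, inner_zero_right]
    rw [inner_add_right, inner_smul_right, inner_smul_right, hvv, hve] at h3
    simp at h3
    rcases h3 with h3 | h3
    · exact ⟨h3, h2⟩
    · exact absurd (by simpa [sq_eq_zero_iff, norm_eq_zero] using h3) hv0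
  have hspan2 : Submodule.span ℝ {(⟨v, hvπ⟩ : π), ⟨e, he⟩} = ⊤ := by
    have := hli.span_eq_top_of_card_eq_finrank (by simp [hdim])
    rwa [show Set.range ![(⟨v, hvπ⟩ : π), ⟨e, he⟩] = {(⟨v, hvπ⟩ : π), ⟨e, he⟩} by
      simp [Matrix.range_cons, Matrix.range_empty, Set.insert_def]; ext x; simp [or_comm]] at this
  -- decomposition of elements of π
  have hdec : ∀ u ∈ π, ∃ x : ℝ, u = x • v + (inner ℝ e u : ℝ) • e := by
    intro u hu
    have : (⟨u, hu⟩ : π) ∈ Submodule.span ℝ {(⟨v, hvπ⟩ : π), ⟨e, he⟩} := by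
      rw [hspan2]; trivial
    rw [Submodule.mem_span_pair] at this
    obtain ⟨x, y, hxy⟩ := this
    have h1 : x • v + y • e = u := by
      have := congrArg (Subtype.val) hxy; simpa using this
    refine ⟨x, ?_⟩
    have : (inner ℝ e u : ℝ) = y := by
      rw [← h1, inner_add_right, inner_smul_right, inner_smul_right, heo, hee]; ring
    rw [this, h1]
  let g : EuclideanSpace ℝ (Fin 3) →ₗ[ℝ] ℝ :=
    { toFun := fun w => (inner ℝ e w : ℝ)
      map_add' := fun a b => inner_add_right e a b
      map_smul' := fun c x => real_inner_smul_right e x c }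
  -- S nontrivial
  have hnt : ∃ w ∈ Λ, (inner ℝ e w : ℝ) ≠ 0 := by
    by_contra h
    push_neg at h
    have hker : (Λ : Set (EuclideanSpace ℝ (Fin 3))) ⊆
        (LinearMap.ker g : Set (EuclideanSpace ℝ (Fin 3))) := fun w hw => by
      simpa [g, LinearMap.mem_ker] using h w hw
    have : π ≤ LinearMap.ker g := by
      rw [← hspan]; exact Submodule.span_le.mpr hker
    have h2 : (inner ℝ e e : ℝ) = 0 := this he
    rw [hee] at h2
    norm_num at h2
  -- finiteness of bounded pieces of Λ
  have hfinΛ : ∀ R : ℝ,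
      ((Λ : Set (EuclideanSpace ℝ (Fin 3))) ∩ closedBall 0 R).Finite := by
    intro R
    have hcl : IsClosed (Λ : Set (EuclideanSpace ℝ (Fin 3))) := AddSubgroup.isClosed_of_discrete
    have hK : IsCompact ((Λ : Set (EuclideanSpace ℝ (Fin 3))) ∩ closedBall 0 R) := by
      rw [Metric.isCompact_iff_isClosed_bounded]
      exact ⟨hcl.inter isClosed_closedBall, (Metric.isBounded_closedBall).subset
        Set.inter_subset_right⟩
    exact hK.finite (isDiscrete_iff_discreteTopology.mpr (DiscreteTopology.of_subset hdisc Set.inter_subset_left))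
  -- the set of e-components in (0,1] is finite
  have hfinS : ({s : ℝ | ∃ w ∈ Λ, (inner ℝ e w : ℝ) = s} ∩ Set.Ioc 0 1).Finite := by
    have h1 : ({s : ℝ | ∃ w ∈ Λ, (inner ℝ e w : ℝ) = s} ∩ Set.Ioc 0 1) ⊆
        (fun w => (inner ℝ e w : ℝ)) ''
          ((Λ : Set (EuclideanSpace ℝ (Fin 3))) ∩ closedBall 0 (‖v‖ + 1)) := by
      rintro s ⟨⟨w, hwΛ, hws⟩, hs01⟩
      obtain ⟨x, hx⟩ := hdec w (hsub hwΛ)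
      rw [hws] at hx
      refine ⟨w - (⌊x⌋ : ℝ) • v, ⟨?_, ?_⟩, ?_⟩
      · rw [Int.cast_smul_eq_zsmul ℝ]
        exact AddSubgroup.sub_mem Λ hwΛ (AddSubgroup.zsmul_mem Λ hv _)
      · rw [mem_closedBall, dist_zero_right]
        have hw' : w - (⌊x⌋ : ℝ) • v = (x - ⌊x⌋) • v + s • e := by
          rw [hx]; module
        rw [hw']
        calc ‖(x - ⌊x⌋) • v + s • e‖
            ≤ ‖(x - ⌊x⌋) • v‖ + ‖s • e‖ := norm_add_le _ _
          _ ≤ ‖v‖ + 1 := by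
              rw [norm_smul, norm_smul, hen]
              simp only [Real.norm_eq_abs]
              have h1 : |x - ⌊x⌋| ≤ 1 := by
                rw [abs_le]
                constructor <;> [linarith [Int.floor_le x]; linarith [Int.lt_floor_add_one x]]
              have h2 : |s| ≤ 1 := by
                rw [abs_le]; exact ⟨by linarith [hs01.1], hs01.2⟩
              nlinarith [norm_nonneg v]
      · show (inner ℝ e (w - (⌊x⌋ : ℝ) • v) : ℝ) = s
        rw [inner_sub_right, real_inner_smul_right, heo, hws]; ring
    exact ((hfinΛ _).image _).subset h1
  -- membership in span {v}, for elements of π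
  have hmem : ∀ w ∈ π, (w ∈ Submodule.span ℝ {v} ↔ (inner ℝ e w : ℝ) = 0) := by
    intro w hw
    constructor
    · intro hws
      obtain ⟨c, rfl⟩ := Submodule.mem_span_singleton.mp hws
      rw [real_inner_smul_right, heo]; ring
    · intro h0
      obtain ⟨x, hx⟩ := hdec w hw
      rw [h0] at hx
      simp only [zero_smul, add_zero] at hx
      exact hx ▸ Submodule.mem_span_singleton.mpr ⟨x, rfl⟩
  -- distance to the line span {v}
  have hdist : ∀ w ∈ π, Metric.infDist w
      (Submodule.span ℝ {v} : Set (EuclideanSpace ℝ (Fin 3))) = |(inner ℝ e w : ℝ)| := by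
    intro w hw
    obtain ⟨b, hbdef⟩ : ∃ b : ℝ, (inner ℝ e w : ℝ) = b := ⟨_, rfl⟩
    rw [hbdef]
    obtain ⟨x, hx⟩ := hdec w hw
    rw [hbdef] at hx
    have hne : (Submodule.span ℝ {v} : Set (EuclideanSpace ℝ (Fin 3))).Nonempty :=
      ⟨0, Submodule.zero_mem _⟩
    refine le_antisymm ?_ ?_
    · have hmemx : x • v ∈ (Submodule.span ℝ {v} : Set (EuclideanSpace ℝ (Fin 3))) :=
        Submodule.mem_span_singleton.mpr ⟨x, rfl⟩
      refine le_trans (infDist_le_dist_of_mem hmemx) ?_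
      rw [dist_eq_norm]
      have : w - x • v = b • e := by rw [hx]; module
      rw [this, norm_smul, hen, mul_one, Real.norm_eq_abs]
    · by_contra hlt
      push_neg at hlt
      obtain ⟨y, hy, hdy⟩ := (infDist_lt_iff hne).mp hlt
      obtain ⟨t, rfl⟩ := Submodule.mem_span_singleton.mp hy
      have hcs : |(inner ℝ e (w - t • v) : ℝ)| ≤ ‖w - t • v‖ := by
        have := abs_real_inner_le_norm e (w - t • v)
        rwa [hen, one_mul] at this
      have hbv : (inner ℝ e (w - t • v) : ℝ) = b := by
        rw [inner_sub_right, real_inner_smul_right, heo, ← hbdef]; ring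
      rw [hbv] at hcs
      rw [dist_eq_norm] at hdy
      linarith [hcs]
  -- dichotomy for the subgroup of e-components
  set S : AddSubgroup ℝ := AddSubgroup.map g.toAddMonoidHom Λ with hS
  have hSmem : ∀ s : ℝ, s ∈ S ↔ ∃ w ∈ Λ, (inner ℝ e w : ℝ) = s := by
    intro s
    rw [hS, AddSubgroup.mem_map]
    constructor
    · rintro ⟨w, hw, rfl⟩; exact ⟨w, hw, rfl⟩
    · rintro ⟨w, hw, rfl⟩; exact ⟨w, hw, rfl⟩
  obtain ⟨a0, ha0, hall, w0, hw0Λ, hw0⟩ :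
      ∃ a0 : ℝ, 0 < a0 ∧ (∀ w ∈ Λ, ∃ n : ℤ, (inner ℝ e w : ℝ) = n * a0) ∧
        ∃ w0 ∈ Λ, (inner ℝ e w0 : ℝ) = a0 := by
    rcases AddSubgroup.dense_or_cyclic S with hd | ⟨a, ha⟩
    · exfalso
      have hU : IsOpen (Set.Ioo (0:ℝ) 1 \
          ({s : ℝ | ∃ w ∈ Λ, (inner ℝ e w : ℝ) = s} ∩ Set.Ioc 0 1)) :=
        isOpen_Ioo.sdiff hfinS.isClosed
      have hUne : (Set.Ioo (0:ℝ) 1 \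
          ({s : ℝ | ∃ w ∈ Λ, (inner ℝ e w : ℝ) = s} ∩ Set.Ioc 0 1)).Nonempty :=
        ((Set.Ioo_infinite (by norm_num)).diff hfinS).nonempty
      obtain ⟨s, hsS, hsU⟩ := hd.exists_mem_open hU hUne
      exact hsU.2 ⟨(hSmem s).mp hsS, Set.Ioo_subset_Ioc_self hsU.1⟩
    · have haS : a ∈ S := by
        rw [ha]; exact AddSubgroup.mem_closure_singleton.mpr ⟨1, one_zsmul a⟩
      have ha0ne : a ≠ 0 := by
        rintro rfl
        obtain ⟨w, hwΛ, hwn⟩ := hnt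
        have : (inner ℝ e w : ℝ) ∈ S := (hSmem _).mpr ⟨w, hwΛ, rfl⟩
        rw [ha] at this
        obtain ⟨n, hn⟩ := AddSubgroup.mem_closure_singleton.mp this
        simp at hn
        exact hwn hn.symm
      refine ⟨|a|, abs_pos.mpr ha0ne, ?_, ?_⟩
      · intro w hwΛ
        have : (inner ℝ e w : ℝ) ∈ S := (hSmem _).mpr ⟨w, hwΛ, rfl⟩
        rw [ha] at this
        obtain ⟨n, hn⟩ := AddSubgroup.mem_closure_singleton.mp this
        rcases abs_choice a with h | h
        · exact ⟨n, by rw [h, ← hn, zsmul_eq_mul]⟩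
        · exact ⟨-n, by rw [h, ← hn, zsmul_eq_mul]; push_cast; ring⟩
      · have habs : |a| ∈ S := by
          rcases abs_choice a with h | h
          · rwa [h]
          · rw [h]; exact AddSubgroup.neg_mem S haS
        obtain ⟨w0, hw0Λ, hw0⟩ := (hSmem _).mp habs
        exact ⟨w0, hw0Λ, hw0⟩
  -- σ = a0
  have hσa : σ = a0 := by
    rw [hσ]
    have hw0π : w0 ∈ π := hsub hw0Λ
    have hw0ns : w0 ∉ Submodule.span ℝ {v} := by
      rw [hmem w0 hw0π, hw0]; exact ne_of_gt ha0
    have ha0D : a0 ∈ {r : ℝ | ∃ w ∈ Λ, w ∉ Submodule.span ℝ {v} ∧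
        r = Metric.infDist w (Submodule.span ℝ {v} : Set (EuclideanSpace ℝ (Fin 3)))} :=
      ⟨w0, hw0Λ, hw0ns, by rw [hdist w0 hw0π, hw0, abs_of_pos ha0]⟩
    have hlb : ∀ r ∈ {r : ℝ | ∃ w ∈ Λ, w ∉ Submodule.span ℝ {v} ∧
        r = Metric.infDist w (Submodule.span ℝ {v} : Set (EuclideanSpace ℝ (Fin 3)))},
        a0 ≤ r := by
      rintro r ⟨w, hwΛ, hwns, rfl⟩
      rw [hdist w (hsub hwΛ)]
      obtain ⟨n, hn⟩ := hall w hwΛ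
      have hn0 : n ≠ 0 := by
        rintro rfl
        apply hwns
        rw [hmem w (hsub hwΛ), hn]; push_cast; ring
      rw [hn, abs_mul, abs_of_pos ha0]
      have : (1 : ℝ) ≤ |(n : ℝ)| := by
        rw [← Int.cast_abs]
        exact_mod_cast Int.one_le_abs (by exact_mod_cast hn0)
      nlinarith
    exact le_antisymm (csInf_le ⟨a0, hlb⟩ ha0D) (le_csInf ⟨a0, ha0D⟩ hlb)
  -- the main covering statement
  have hmain : ∀ u ∈ π, ∃ g ∈ Λ, u - g ∈ P := by
    intro u hu
    obtain ⟨b, hbdef⟩ : ∃ b : ℝ, (inner ℝ e u : ℝ) = b := ⟨_, rfl⟩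
    obtain ⟨x, hx⟩ := hdec u hu
    rw [hbdef] at hx
    obtain ⟨x0, hx0⟩ := hdec w0 (hsub hw0Λ)
    rw [hw0] at hx0
    obtain ⟨n, hn⟩ : ∃ n : ℤ, n = ⌊b / a0⌋ := ⟨_, rfl⟩
    obtain ⟨m, hm⟩ : ∃ m : ℤ, m = ⌊x - n * x0⌋ := ⟨_, rfl⟩
    refine ⟨(n : ℝ) • w0 + (m : ℝ) • v, ?_, ?_⟩
    · rw [Int.cast_smul_eq_zsmul ℝ, Int.cast_smul_eq_zsmul ℝ]
      exact AddSubgroup.add_mem Λ (AddSubgroup.zsmul_mem Λ hw0Λ n)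
        (AddSubgroup.zsmul_mem Λ hv m)
    · rw [hPdef]
      refine ⟨x - n * x0 - m, b - n * a0, ?_, ?_, ?_, ?_⟩
      · have := Int.floor_le (x - (n : ℝ) * x0)
        rw [← hm] at this; linarith
      · have := Int.lt_floor_add_one (x - (n : ℝ) * x0)
        rw [← hm] at this; linarith
      · rw [hσa, abs_le]
        have h1 : (n : ℝ) * a0 ≤ b := by
          have h := Int.floor_le (b / a0)
          rw [← hn] at h
          have h' := mul_le_mul_of_nonneg_right h (le_of_lt ha0)
          rwa [div_mul_cancel₀ b (ne_of_gt ha0)] at h'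
        have h2 : b < ((n : ℝ) + 1) * a0 := by
          have h := Int.lt_floor_add_one (b / a0)
          rw [← hn] at h
          have h' := mul_lt_mul_of_pos_right h ha0
          rwa [div_mul_cancel₀ b (ne_of_gt ha0)] at h'
        constructor <;> nlinarith
      · rw [hx, hx0]; module
  refine ⟨⟨P, subset_rfl, hmain⟩, ?_⟩
  intro ζ hζ
  obtain ⟨g0, hg0Λ, hg0P⟩ := hmain (-ζ) (Submodule.neg_mem π hζ)
  exact ⟨-g0, AddSubgroup.neg_mem Λ hg0Λ, -ζ - g0, hg0P, by abel⟩
end
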